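/- Let R be a commutative ring, h ∈ R⟦t⟧, and let u, v ∈ R⟦t⟧ both have constant term 0. If v ≡ u (mod t^n) for some n ≥ 1, then h(v) ≡ h(u) + h'(u)·(v - u) (mod t^{2n}), where h(u), h(v) denote composition of power series and h' the formal derivative. -/

import Mathlib

open PowerSeries

/-- Composition `h(u)` of formal power series, intended for `u` with zero constant term. -/
noncomputable def pcomp {R : Type*} [CommSemiring R] (h u : R⟦X⟧) : R⟦X⟧ :=
  PowerSeries.mk fun n => ∑ i ∈ Finset.range (n + 1), coeff (R := R) i h * coeff (R := R) n (u ^ i)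

private lemma binom_aux {A : Type*} [CommRing A] (u d : A) :
    ∀ k : ℕ, ∃ w, (u + d) ^ (k + 1) = u ^ (k + 1) + ((k : A) + 1) * (u ^ k * d) + d ^ 2 * w := by
  intro k
  induction k with
  | zero => exact ⟨0, by ring⟩
  | succ k ih =>
    obtain ⟨w, hw⟩ := ih
    refine ⟨((k : A) + 1) * u ^ k + w * (u + d), ?_⟩
    rw [pow_succ (u + d), hw]
    push_cast
    ring

private lemma pcomp_approx {R : Type*} [CommRing R] (g u : R⟦X⟧)
    (hu : constantCoeff (R := R) u = 0) (M : ℕ) :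
    (X : R⟦X⟧) ^ (M + 1) ∣
      pcomp g u - ∑ k ∈ Finset.range (M + 1), C (R := R) (coeff (R := R) k g) * u ^ k := by
  rw [X_pow_dvd_iff]
  intro i hi
  rw [map_sub, map_sum, sub_eq_zero]
  simp only [coeff_C_mul]
  rw [pcomp, coeff_mk]
  refine (Finset.sum_subset (f := fun k => coeff (R := R) k g * coeff (R := R) i (u ^ k))
    (Finset.range_subset_range.mpr hi) ?_)
  intro k _ hk
  rw [Finset.mem_range, not_lt] at hk
  have hXk : (X : R⟦X⟧) ^ k ∣ u ^ k := pow_dvd_pow_of_dvd (X_dvd_iff.mpr hu) k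
  exact mul_eq_zero_of_right _ (X_pow_dvd_iff.mp hXk i hk)

/-- first-order expansion of composition:
if `v ≡ u (mod t^n)` then `h(v) ≡ h(u) + h'(u)·(v - u) (mod t^{2n})`. -/
theorem stmt3 {R : Type*} [CommRing R] (h u v : R⟦X⟧)
    (hu : constantCoeff (R := R) u = 0) (hv : constantCoeff (R := R) v = 0)
    (n : ℕ) (hn : 1 ≤ n)
    (hcong : ∀ i < n, coeff (R := R) i v = coeff (R := R) i u) :
    ∀ i < 2 * n,
      coeff (R := R) i (pcomp h v) =
        coeff (R := R) i (pcomp h u + pcomp (derivativeFun h) u * (v - u)) := by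
  set d : R⟦X⟧ := v - u with hd_def
  set M : ℕ := 2 * n with hM
  suffices hdvd : (X : R⟦X⟧) ^ (2 * n) ∣
      pcomp h v - (pcomp h u + pcomp (derivativeFun h) u * d) by
    intro i hi
    have := X_pow_dvd_iff.mp hdvd i hi
    rw [map_sub, sub_eq_zero] at this
    exact this
  -- notation for truncated sums
  set Sv : R⟦X⟧ := ∑ k ∈ Finset.range (M + 1), C (R := R) (coeff (R := R) k h) * v ^ k with hSv
  set Su : R⟦X⟧ := ∑ k ∈ Finset.range (M + 1), C (R := R) (coeff (R := R) k h) * u ^ k with hSu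
  set S' : R⟦X⟧ := ∑ k ∈ Finset.range (M + 1), C (R := R) (coeff (R := R) k (derivativeFun h)) * u ^ k with hS'
  have h2nM : (X : R⟦X⟧) ^ (2 * n) ∣ (X : R⟦X⟧) ^ (M + 1) := pow_dvd_pow _ (by omega)
  have h1 : (X : R⟦X⟧) ^ (2 * n) ∣ pcomp h v - Sv := h2nM.trans (pcomp_approx h v hv M)
  have h2 : (X : R⟦X⟧) ^ (2 * n) ∣ pcomp h u - Su := h2nM.trans (pcomp_approx h u hu M)
  have h3 : (X : R⟦X⟧) ^ (2 * n) ∣ pcomp (derivativeFun h) u - S' :=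
    h2nM.trans (pcomp_approx (derivativeFun h) u hu M)
  have hdn : (X : R⟦X⟧) ^ n ∣ d := by
    rw [X_pow_dvd_iff]
    intro i hi
    rw [hd_def, map_sub, hcong i hi, sub_self]
  have hd2 : (X : R⟦X⟧) ^ (2 * n) ∣ d ^ 2 := by
    rw [two_mul, pow_add, sq]
    exact mul_dvd_mul hdn hdn
  have hXu : (X : R⟦X⟧) ∣ u := X_dvd_iff.mpr hu
  -- key algebraic identity
  have hvud : v = u + d := by rw [hd_def]; ring
  choose w hw using binom_aux u d
  have key : (X : R⟦X⟧) ^ (2 * n) ∣ Sv - Su - S' * d := by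
    have e1 : Sv - Su - S' * d =
        (∑ k ∈ Finset.range M, C (R := R) (coeff (R := R) (k + 1) h) * (d ^ 2 * w k))
          - C (R := R) (coeff (R := R) M (derivativeFun h)) * u ^ M * d := by
      rw [hSv, hSu, hS']
      rw [Finset.sum_range_succ (fun k => C (R := R) (coeff (R := R) k (derivativeFun h)) * u ^ k) M]
      rw [Finset.sum_range_succ' (fun k => C (R := R) (coeff (R := R) k h) * v ^ k) M]
      rw [Finset.sum_range_succ' (fun k => C (R := R) (coeff (R := R) k h) * u ^ k) M]
      have hv' : ∀ k : ℕ, v ^ (k + 1) = u ^ (k + 1) + ((k : R⟦X⟧) + 1) * (u ^ k * d) + d ^ 2 * w k := by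
        intro k; rw [hvud]; exact hw k
      have hC : ∀ k : ℕ, (C (R := R) (coeff (R := R) k (derivativeFun h)) : R⟦X⟧) =
          C (R := R) (coeff (R := R) (k + 1) h) * ((k : R⟦X⟧) + 1) := by
        intro k
        rw [show derivativeFun h = derivative R h from rfl, coeff_derivative, map_mul, map_add, map_one, map_natCast]
      simp only [hv', hC, pow_zero, mul_one]
      have e3 : (∑ k ∈ Finset.range M,
          (C (R := R) (coeff (R := R) (k + 1) h) *
              (u ^ (k + 1) + ((k : R⟦X⟧) + 1) * (u ^ k * d) + d ^ 2 * w k)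
            - C (R := R) (coeff (R := R) (k + 1) h) * u ^ (k + 1)
            - C (R := R) (coeff (R := R) (k + 1) h) * ((k : R⟦X⟧) + 1) * u ^ k * d)) =
          ∑ k ∈ Finset.range M, C (R := R) (coeff (R := R) (k + 1) h) * (d ^ 2 * w k) :=
        Finset.sum_congr rfl fun k _ => by ring
      rw [Finset.sum_sub_distrib, Finset.sum_sub_distrib] at e3
      rw [add_mul, Finset.sum_mul]
      linear_combination e3
    rw [e1]
    refine dvd_sub (dvd_trans hd2 ?_) ?_
    · exact Finset.dvd_sum fun k _ => Dvd.dvd.mul_left (Dvd.dvd.mul_right dvd_rfl (w k)) _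
    · have : (X : R⟦X⟧) ^ (2 * n) ∣ u ^ M := by
        rw [hM]; exact pow_dvd_pow_of_dvd hXu (2 * n)
      exact (this.mul_left _).mul_right d
  have e : pcomp h v - (pcomp h u + pcomp (derivativeFun h) u * d) =
      ((pcomp h v - Sv) - (pcomp h u - Su) - (pcomp (derivativeFun h) u - S') * d)
        + (Sv - Su - S' * d) := by ring
  rw [e]
  exact dvd_add (dvd_sub (dvd_sub h1 h2) (h3.mul_right d)) key
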